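/- For the stochastic mass action system with species $(A,B,C,D)$ and reactions $A+B\to B+C$, $B+C\to 2B$, $2B\to B+C$, $2B\to 2D$, $C\to A$, $D\to B$, with initial state satisfying $\|X(0)\|_1 \geq 2$ and $X_2(0)+X_4(0)\geq 1$: no extinction set for any of the six reactions is reachable from $X(0)$. -/
import Mathlib


open Finset

/-- A state: copy-numbers of the `d` species. -/
abbrev State (d : ℕ) := Fin d → ℕ

/-- A reaction: a pair (source complex, product complex). -/
abbrev Rxn (d : ℕ) := (State d) × (State d)

/-- A reaction with source `y` is active at `x` iff `x ≥ y` componentwise. -/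
def active {d : ℕ} (y x : State d) : Prop := ∀ i, y i ≤ x i

/-- One-step reachability: from `x` jump to `x + y' - y` whenever `x ≥ y` for a reaction `y → y'`. -/
def step {d : ℕ} (R : List (Rxn d)) (x x' : State d) : Prop :=
  ∃ r ∈ R, active r.1 x ∧ ∀ i, x' i + r.1 i = x i + r.2 i

/-- Reachability: reflexive-transitive closure of one-step reachability. -/
def reach {d : ℕ} (R : List (Rxn d)) : State d → State d → Prop :=
  Relation.ReflTransGen (step R)

/-- A set is closed if no state outside it is reachable from inside it. -/
def closedSet {d : ℕ} (R : List (Rxn d)) (Γ : Set (State d)) : Prop :=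
  ∀ x ∈ Γ, ∀ x', reach R x x' → x' ∈ Γ

/-- An extinction set for a reaction: a closed set on which the reaction is never active. -/
def extinctionSet {d : ℕ} (R : List (Rxn d)) (r : Rxn d) (Γ : Set (State d)) : Prop :=
  closedSet R Γ ∧ ∀ x ∈ Γ, ¬ active r.1 x

/-- No extinction set for `r` is reachable from `x`. -/
def noExtSetReachable {d : ℕ} (R : List (Rxn d)) (r : Rxn d) (x : State d) : Prop :=
  ∀ Γ : Set (State d), extinctionSet R r Γ → ∀ x' ∈ Γ, ¬ reach R x x'

/-- The network A+B → B+C, B+C → 2B, 2B → B+C, 2B → 2D, C → A, D → B. -/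
def N4 : List (Rxn 4) :=
  [(![1,1,0,0], ![0,1,1,0]), (![0,1,1,0], ![0,2,0,0]), (![0,2,0,0], ![0,1,1,0]),
   (![0,2,0,0], ![0,0,0,2]), (![0,0,1,0], ![1,0,0,0]), (![0,0,0,1], ![0,1,0,0])]


section Aux

/-- invariants: total mass ≥ 2, B + D ≥ 1. -/
def inv4 (x : State 4) : Prop := 2 ≤ x 0 + x 1 + x 2 + x 3 ∧ 1 ≤ x 1 + x 3

lemma do_step (r : Rxn 4) (hr : r ∈ N4) (x : State 4) (h : active r.1 x) :
    step N4 x (fun i => x i + r.2 i - r.1 i) :=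
  ⟨r, hr, h, fun i => by have := h i; simp only []; omega⟩

lemma step_inv {x x' : State 4} (h : step N4 x x') (hx : inv4 x) : inv4 x' := by
  obtain ⟨r, hr, ha, he⟩ := h
  have h0 := he 0; have h1 := he 1; have h2 := he 2; have h3 := he 3
  have a0 := ha 0; have a1 := ha 1; have a2 := ha 2; have a3 := ha 3
  simp [N4] at hr
  obtain ⟨hx1, hx2⟩ := hx
  rcases hr with h|h|h|h|h|h <;> subst h <;>
    simp at h0 h1 h2 h3 a0 a1 a2 a3 <;> exact ⟨by omega, by omega⟩

lemma reach_inv {x x' : State 4} (h : reach N4 x x') (hx : inv4 x) : inv4 x' := by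
  induction h with
  | refl => exact hx
  | tail _ hs ih => exact step_inv hs ih

/-- Convert all D into B. -/
lemma clearD : ∀ n (x : State 4), x 3 = n →
    ∃ z, reach N4 x z ∧ z 0 = x 0 ∧ z 1 = x 1 + x 3 ∧ z 2 = x 2 ∧ z 3 = 0 := by
  intro n
  induction n with
  | zero => exact fun x h => ⟨x, Relation.ReflTransGen.refl, rfl, by omega, rfl, h⟩
  | succ n ih =>
    intro x h
    set r : Rxn 4 := (![0,0,0,1], ![0,1,0,0]) with hr
    have hact : active r.1 x := by
      intro i; fin_cases i <;> simp [hr] <;> omega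
    have hs := do_step r (by simp [N4, hr]) x hact
    set x' := fun i => x i + r.2 i - r.1 i with hx'
    have e0 : x' 0 = x 0 := by simp [hx', hr]
    have e1 : x' 1 = x 1 + 1 := by simp [hx', hr]
    have e2 : x' 2 = x 2 := by simp [hx', hr]
    have e3 : x' 3 = n := by simp [hx', hr]; omega
    obtain ⟨z, hz, z0, z1, z2, z3⟩ := ih x' e3
    exact ⟨z, Relation.ReflTransGen.head hs hz, by omega, by omega, by omega, z3⟩

/-- From any invariant state we can reach a state with at least two B's. -/
lemma reachB2 (x : State 4) (hx : inv4 x) : ∃ z, reach N4 x z ∧ 2 ≤ z 1 := by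
  obtain ⟨hx1, hx2⟩ := hx
  obtain ⟨z, hz, z0, z1, z2, z3⟩ := clearD (x 3) x rfl
  by_cases h2 : 2 ≤ z 1
  · exact ⟨z, hz, h2⟩
  have hz1 : z 1 = 1 := by omega
  by_cases hc : 1 ≤ z 2
  · -- fire B+C → 2B
    set r : Rxn 4 := (![0,1,1,0], ![0,2,0,0]) with hr
    have hact : active r.1 z := by intro i; fin_cases i <;> simp [hr] <;> omega
    have hs := do_step r (by simp [N4, hr]) z hact
    refine ⟨_, Relation.ReflTransGen.tail hz hs, ?_⟩
    simp [hr]; omega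
  · -- z 0 ≥ 1 : fire A+B → B+C, then B+C → 2B
    have ha : 1 ≤ z 0 := by omega
    set r1 : Rxn 4 := (![1,1,0,0], ![0,1,1,0]) with hr1
    have hact1 : active r1.1 z := by intro i; fin_cases i <;> simp [hr1] <;> omega
    have hs1 := do_step r1 (by simp [N4, hr1]) z hact1
    set w := fun i => z i + r1.2 i - r1.1 i with hw
    have w1 : w 1 = 1 := by simp [hw, hr1]; omega
    have w2 : w 2 = z 2 + 1 := by simp [hw, hr1]
    set r2 : Rxn 4 := (![0,1,1,0], ![0,2,0,0]) with hr2
    have hact2 : active r2.1 w := by intro i; fin_cases i <;> simp [hr2] <;> omega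
    have hs2 := do_step r2 (by simp [N4, hr2]) w hact2
    refine ⟨_, Relation.ReflTransGen.tail (Relation.ReflTransGen.tail hz hs1) hs2, ?_⟩
    simp [hr2]; omega

/-- From any invariant state, every reaction can be activated. -/
lemma main_activate (x : State 4) (hx : inv4 x) :
    ∀ r ∈ N4, ∃ z, reach N4 x z ∧ active r.1 z := by
  obtain ⟨z, hz, hz1⟩ := reachB2 x hx
  -- fire 2B → B+C from z
  set r3 : Rxn 4 := (![0,2,0,0], ![0,1,1,0]) with hr3
  have hact3 : active r3.1 z := by intro i; fin_cases i <;> simp [hr3] <;> omega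
  have hs3 := do_step r3 (by simp [N4, hr3]) z hact3
  set w := fun i => z i + r3.2 i - r3.1 i with hw
  have w0 : w 0 = z 0 := by simp [hw, hr3]
  have w1 : w 1 = z 1 - 1 := by simp [hw, hr3]
  have w2 : w 2 = z 2 + 1 := by simp [hw, hr3]
  have hzw : reach N4 x w := Relation.ReflTransGen.tail hz hs3
  -- fire C → A from w
  set r5 : Rxn 4 := (![0,0,1,0], ![1,0,0,0]) with hr5
  have hact5 : active r5.1 w := by intro i; fin_cases i <;> simp [hr5, hw, hr3] <;> omega
  have hs5 := do_step r5 (by simp [N4, hr5]) w hact5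
  set v := fun i => w i + r5.2 i - r5.1 i with hv
  have v0 : v 0 = w 0 + 1 := by simp [hv, hr5]
  have v1 : v 1 = w 1 := by simp [hv, hr5]
  have hzv : reach N4 x v := Relation.ReflTransGen.tail hzw hs5
  -- fire 2B → 2D from z
  set r4 : Rxn 4 := (![0,2,0,0], ![0,0,0,2]) with hr4
  have hact4 : active r4.1 z := by intro i; fin_cases i <;> simp [hr4] <;> omega
  have hs4 := do_step r4 (by simp [N4, hr4]) z hact4
  set u := fun i => z i + r4.2 i - r4.1 i with hu
  have u3 : u 3 = z 3 + 2 := by simp [hu, hr4]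
  have hzu : reach N4 x u := Relation.ReflTransGen.tail hz hs4
  intro r hr
  simp [N4] at hr
  rcases hr with h|h|h|h|h|h <;> subst h
  · exact ⟨v, hzv, by intro i; fin_cases i <;> simp <;> omega⟩
  · exact ⟨w, hzw, by intro i; fin_cases i <;> simp [hw, hr3] <;> omega⟩
  · exact ⟨z, hz, by intro i; fin_cases i <;> simp <;> omega⟩
  · exact ⟨z, hz, by intro i; fin_cases i <;> simp <;> omega⟩
  · exact ⟨w, hzw, by intro i; fin_cases i <;> simp [hw, hr3] <;> omega⟩
  · exact ⟨u, hzu, by intro i; fin_cases i <;> simp [hu, hr4] <;> omega⟩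

end Aux

/-- If `‖X(0)‖₁ ≥ 2` and `X₂(0) + X₄(0) ≥ 1`, then no extinction set for any of the six
reactions is reachable from `X(0)`. -/
theorem no_extinction_N4 (x0 : State 4)
    (hm : 2 ≤ ∑ i, x0 i) (hb : 1 ≤ x0 1 + x0 3) :
    ∀ r ∈ N4, noExtSetReachable N4 r x0 := by
  intro r hr Γ hΓ x' hx' hreach
  obtain ⟨hcl, hna⟩ := hΓ
  have hinv0 : inv4 x0 := by
    constructor
    · have : ∑ i, x0 i = x0 0 + x0 1 + x0 2 + x0 3 := by
        simp [Fin.sum_univ_four]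
      omega
    · exact hb
  have hinv : inv4 x' := reach_inv hreach hinv0
  obtain ⟨z, hz, hact⟩ := main_activate x' hinv r hr
  exact hna z (hcl x' hx' z hz) hact
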